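/- For every integer n, F(3n + 2) = 3·T_R(n) + 2. That is, T_R is conjugate to F via the bijection S(n) = 3n + 2 from ℤ onto the set of integers congruent to 2 (mod 3). -/
import Mathlib


/-- The Collatz function. -/
def T (n : ℤ) : ℤ := if n % 2 = 0 then n / 2 else (3 * n + 1) / 2

/-- The map `F`, defined on integers congruent to 2 (mod 3):
`F n = T n` if `n ≡ 5 (mod 6)` and `F n = T (T n)` if `n ≡ 2 (mod 6)`. -/
def F (n : ℤ) : ℤ := if n % 6 = 5 then T n else T (T n)

/-- The refined map `T_R`. -/
def TR (n : ℤ) : ℤ :=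
  if n % 4 = 0 then 3 * n / 4
  else if n % 4 = 2 then (n - 2) / 4
  else (3 * n + 1) / 2

theorem stmt_6 (n : ℤ) : F (3 * n + 2) = 3 * TR n + 2 := by
  simp only [F, T, TR]
  split_ifs <;> omega
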